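/- arXiv:2008.12499 — 2 statements merged into one kernel-verified Lean document; each statement's English description precedes it below -/
import Mathlib

section
/- The equilibria of the ODE dV/dt = (σ/(2C))(V - (β/2)V³) - (k_v k_i/(2C))(C_α P/V + S_α Q/V + C_β V) with V > 0 are exactly V = k_v · sqrt( (σ_β ± sqrt(σ_β² - 6α(k_i/k_v)(C_α P + S_α Q)))/(3α) ), where β = 3α/(k_v² σ) and σ_β = σ - k_v k_i C_β. -/
/-- The positive equilibria of the averaged VOC voltage ODE are exactly
the two closed-form roots. -/
theorem voc_equilibria_characterization
    (σ α C kv ki Cα Cβ Sα P Q : ℝ)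
    (hσ : 0 < σ) (hα : 0 < α) (hC : 0 < C) (hkv : 0 < kv) (hki : 0 < ki)
    (β : ℝ) (hβ : β = 3 * α / (kv ^ 2 * σ))
    (σβ : ℝ) (hσβdef : σβ = σ - kv * ki * Cβ) (hσβ : 0 < σβ)
    (hdisc : 0 ≤ σβ ^ 2 - 6 * α * (ki / kv) * (Cα * P + Sα * Q)) :
    ∀ V : ℝ,
      (0 < V ∧
        σ / (2 * C) * (V - β / 2 * V ^ 3)
          - kv * ki / (2 * C) * (Cα * P / V + Sα * Q / V + Cβ * V) = 0)
      ↔ (0 < V ∧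
        (V = kv * Real.sqrt ((σβ +
            Real.sqrt (σβ ^ 2 - 6 * α * (ki / kv) * (Cα * P + Sα * Q))) / (3 * α))
        ∨ V = kv * Real.sqrt ((σβ -
            Real.sqrt (σβ ^ 2 - 6 * α * (ki / kv) * (Cα * P + Sα * Q))) / (3 * α)))) := by
  intro V
  have hkv0 : kv ≠ 0 := ne_of_gt hkv
  have hα0 : (3:ℝ) * α ≠ 0 := by positivity
  have hC0 : C ≠ 0 := ne_of_gt hC
  have hσ0 : σ ≠ 0 := ne_of_gt hσ
  set S : ℝ := Cα * P + Sα * Q with hS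
  set s : ℝ := Real.sqrt (σβ ^ 2 - 6 * α * (ki / kv) * S) with hsdef
  have hs2 : s ^ 2 = σβ ^ 2 - 6 * α * (ki / kv) * S := Real.sq_sqrt hdisc
  have hs2' : kv * s ^ 2 = kv * σβ ^ 2 - 6 * α * ki * S := by
    rw [hs2]; field_simp
  have hs0 : 0 ≤ s := Real.sqrt_nonneg _
  set a : ℝ := (σβ + s) / (3 * α) with hadef
  set b : ℝ := (σβ - s) / (3 * α) with hbdef
  have ha : a * (3 * α) = σβ + s := div_mul_cancel₀ _ hα0
  have hb : b * (3 * α) = σβ - s := div_mul_cancel₀ _ hα0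
  constructor
  · rintro ⟨hV, heq⟩
    refine ⟨hV, ?_⟩
    have hVne : V ≠ 0 := ne_of_gt hV
    have hpoly : 3 * α * V ^ 4 - 2 * kv ^ 2 * σβ * V ^ 2 + 2 * kv ^ 3 * ki * S = 0 := by
      rw [hβ] at heq
      field_simp at heq
      refine mul_left_cancel₀ (show (2:ℝ) * C * σ ≠ 0 by positivity) ?_
      rw [mul_zero, hσβdef]
      linear_combination (-(2 * C * σ)) * heq
    have hfac : (V ^ 2 - kv ^ 2 * a) * (V ^ 2 - kv ^ 2 * b) = 0 := by
      refine mul_left_cancel₀ (show (9:ℝ) * α ^ 2 * kv ≠ 0 by positivity) ?_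
      rw [mul_zero]
      linear_combination (3 * α * kv) * hpoly
        + (kv ^ 5 * (3 * α * b) - 3 * α * kv ^ 3 * V ^ 2) * ha
        + (kv ^ 5 * (σβ + s) - 3 * α * kv ^ 3 * V ^ 2) * hb
        - kv ^ 4 * hs2'
    rcases mul_eq_zero.mp hfac with h | h
    · left
      have hu : V ^ 2 = kv ^ 2 * a := by linarith
      have hVV := Real.sqrt_sq hV.le
      rw [← hVV, hu, Real.sqrt_mul (sq_nonneg kv), Real.sqrt_sq hkv.le]
    · right
      have hu : V ^ 2 = kv ^ 2 * b := by linarith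
      have hVV := Real.sqrt_sq hV.le
      rw [← hVV, hu, Real.sqrt_mul (sq_nonneg kv), Real.sqrt_sq hkv.le]
  · rintro ⟨hV, h | h⟩
    · refine ⟨hV, ?_⟩
      have hVne : V ≠ 0 := ne_of_gt hV
      have ha0 : 0 ≤ a := by rw [hadef]; positivity
      have hu : V ^ 2 = kv ^ 2 * a := by
        rw [h, mul_pow, Real.sq_sqrt ha0]
      have hquad : 3 * α * V ^ 4 - 2 * kv ^ 2 * σβ * V ^ 2 + 2 * kv ^ 3 * ki * S = 0 := by
        refine mul_left_cancel₀ (show kv * (3 * α) ≠ 0 by positivity) ?_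
        rw [mul_zero]
        linear_combination (9 * α ^ 2 * kv * (V ^ 2 + kv ^ 2 * a)
            - 6 * α * kv ^ 3 * σβ) * hu
          + kv ^ 5 * (3 * α * a + s - σβ) * ha + kv ^ 4 * hs2'
      rw [hσβdef] at hquad
      rw [hβ]
      field_simp
      linear_combination -hquad
    · refine ⟨hV, ?_⟩
      have hVne : V ≠ 0 := ne_of_gt hV
      have hb0 : 0 ≤ b := by
        by_contra hle
        push_neg at hle
        have h0 : Real.sqrt b = 0 := Real.sqrt_eq_zero_of_nonpos hle.le
        rw [h, h0, mul_zero] at hV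
        exact lt_irrefl 0 hV
      have hu : V ^ 2 = kv ^ 2 * b := by
        rw [h, mul_pow, Real.sq_sqrt hb0]
      have hquad : 3 * α * V ^ 4 - 2 * kv ^ 2 * σβ * V ^ 2 + 2 * kv ^ 3 * ki * S = 0 := by
        refine mul_left_cancel₀ (show kv * (3 * α) ≠ 0 by positivity) ?_
        rw [mul_zero]
        linear_combination (9 * α ^ 2 * kv * (V ^ 2 + kv ^ 2 * b)
            - 6 * α * kv ^ 3 * σβ) * hu
          + kv ^ 5 * (3 * α * b - s - σβ) * hb + kv ^ 4 * hs2'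
      rw [hσβdef] at hquad
      rw [hβ]
      field_simp
      linear_combination -hquad
end

section
/- If 0 ≤ S < S_cr := σ_β²/(6α(k_i/k_v)) then the high-voltage equilibrium V_eq = k_v·sqrt((σ_β + sqrt(σ_β² − 6α(k_i/k_v)S))/(3α)) satisfies V_cr < V_eq ≤ V_oc, where V_cr = k_v·sqrt(σ_β/(3α)) and V_oc = k_v·sqrt(2σ_β/(3α)), with equality V_eq = V_oc iff S = 0. -/
/-- If 0 ≤ S < S_cr := σβ²/(6α(kᵢ/k_v)), the high-voltage equilibrium
V_eq = k_v√((σβ + √(σβ² − 6α(kᵢ/k_v)S))/(3α)) satisfies V_cr < V_eq ≤ V_oc, with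
V_eq = V_oc iff S = 0, where V_cr = k_v√(σβ/(3α)) and V_oc = k_v√(2σβ/(3α)). -/
theorem voc_high_voltage_between_cr_and_oc
    (α ki kv σβ S : ℝ)
    (hα : 0 < α) (hki : 0 < ki) (hkv : 0 < kv) (hσβ : 0 < σβ)
    (hS0 : 0 ≤ S) (hScr : S < σβ ^ 2 / (6 * α * (ki / kv))) :
    kv * Real.sqrt (σβ / (3 * α)) <
      kv * Real.sqrt ((σβ + Real.sqrt (σβ ^ 2 - 6 * α * (ki / kv) * S)) / (3 * α)) ∧
    kv * Real.sqrt ((σβ + Real.sqrt (σβ ^ 2 - 6 * α * (ki / kv) * S)) / (3 * α)) ≤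
      kv * Real.sqrt (2 * σβ / (3 * α)) ∧
    (kv * Real.sqrt ((σβ + Real.sqrt (σβ ^ 2 - 6 * α * (ki / kv) * S)) / (3 * α))
        = kv * Real.sqrt (2 * σβ / (3 * α)) ↔ S = 0) := by
  have hc : 0 < 6 * α * (ki / kv) := by positivity
  have hD : 0 < σβ ^ 2 - 6 * α * (ki / kv) * S := by
    have h := (lt_div_iff₀ hc).mp hScr
    nlinarith
  have hDle : σβ ^ 2 - 6 * α * (ki / kv) * S ≤ σβ ^ 2 := by
    nlinarith [mul_nonneg hc.le hS0]
  have hsD : 0 < Real.sqrt (σβ ^ 2 - 6 * α * (ki / kv) * S) := Real.sqrt_pos.mpr hD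
  have hsDle : Real.sqrt (σβ ^ 2 - 6 * α * (ki / kv) * S) ≤ σβ := by
    calc Real.sqrt (σβ ^ 2 - 6 * α * (ki / kv) * S) ≤ Real.sqrt (σβ ^ 2) :=
      Real.sqrt_le_sqrt hDle
    _ = σβ := by rw [Real.sqrt_sq hσβ.le]
  have h3α : 0 < 3 * α := by positivity
  refine ⟨?_, ?_, ?_⟩
  · exact mul_lt_mul_of_pos_left
      (Real.sqrt_lt_sqrt (by positivity) ((div_lt_div_iff_of_pos_right h3α).mpr (by linarith))) hkv
  · exact mul_le_mul_of_nonneg_left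
      (Real.sqrt_le_sqrt ((div_le_div_iff_of_pos_right h3α).mpr (by linarith))) hkv.le
  · constructor
    · intro h
      have h2 := mul_left_cancel₀ hkv.ne' h
      have h3 : (σβ + Real.sqrt (σβ ^ 2 - 6 * α * (ki / kv) * S)) / (3 * α)
          = 2 * σβ / (3 * α) := by
        have ha : 0 ≤ (σβ + Real.sqrt (σβ ^ 2 - 6 * α * (ki / kv) * S)) / (3 * α) := by
          positivity
        have hb : 0 ≤ 2 * σβ / (3 * α) := by positivity
        exact (Real.sqrt_inj ha hb).mp h2
      have h4 : Real.sqrt (σβ ^ 2 - 6 * α * (ki / kv) * S) = σβ := by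
        have := (div_left_inj' h3α.ne').mp h3
        linarith
      have h5 : σβ ^ 2 - 6 * α * (ki / kv) * S = σβ ^ 2 := by
        have := Real.sq_sqrt hD.le
        rw [h4] at this
        linarith [this]
      have h6 : 6 * α * (ki / kv) * S = 0 := by linarith
      rcases mul_eq_zero.mp h6 with h7 | h7
      · exact absurd h7 hc.ne'
      · exact h7
    · intro h
      subst h
      norm_num [Real.sqrt_sq hσβ.le, two_mul]
end
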